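/- arXiv:2001.05787 — 2 statements merged into one kernel-verified Lean document; each statement's English description precedes it below -/
import Mathlib

section
/- Let n, r be positive integers, u_1 ∈ {0,…,n−1}, u_2 ∈ {0,…,r−1}, and w_0, …, w_{r−1} ∈ ℂ. Let g := gcd(n, u_1) (with gcd(n,0) = n). Then ∑_{x ∈ {0,…,r−1}^n} e(u_1/n)^{γ(x)} · e(u_2/r)^{σ(x)} · ∏_{i=0}^{r−1} w_i^{τ_i(x)} = ( ∑_{i=0}^{r−1} w_i^{n/g} · e( i·n·u_2 / (g·r) ) )^{g}. -/
open scoped Classical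
open Finset

/-- `e(x) = exp(2πi x)` -/
noncomputable def expu (x : ℝ) : ℂ := Complex.exp (2 * Real.pi * Complex.I * x)

/-- `γ(x) = ∑_{i=1}^{n-1} i·𝟙{x_i > x_{i+1}}` (1-indexed). -/
noncomputable def gam {n r : ℕ} (x : Fin n → Fin r) : ℕ :=
  ∑ i : Fin n, if h : (i : ℕ) + 1 < n then
      (if (x ⟨(i : ℕ) + 1, h⟩ : ℕ) < (x i : ℕ) then (i : ℕ) + 1 else 0) else 0

/-- `σ(x) = ∑ x_i`. -/
noncomputable def sig {n r : ℕ} (x : Fin n → Fin r) : ℕ := ∑ i : Fin n, (x i : ℕ)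

/-- `τ_j(x)` : the number of components of `x` equal to `j`. -/
noncomputable def tau {n r : ℕ} (j : Fin r) (x : Fin n → Fin r) : ℕ :=
  (Finset.univ.filter (fun i => x i = j)).card


lemma expu_add (x y : ℝ) : expu (x + y) = expu x * expu y := by
  simp [expu, mul_add, Complex.exp_add]

lemma expu_pow (x : ℝ) (k : ℕ) : expu x ^ k = expu (k * x) := by
  rw [expu, expu, ← Complex.exp_nat_mul]; push_cast; ring_nf

lemma expu_int (k : ℤ) : expu k = 1 := by
  rw [expu, Complex.exp_eq_one_iff]
  exact ⟨k, by push_cast; ring⟩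

lemma expu_nat (k : ℕ) : expu k = 1 := by
  simpa using expu_int k

lemma expu_eq_one_iff (x : ℝ) : expu x = 1 ↔ ∃ k : ℤ, x = k := by
  rw [expu, Complex.exp_eq_one_iff]
  constructor
  · rintro ⟨k, hk⟩
    refine ⟨k, ?_⟩
    have h2 : (2 * Real.pi * Complex.I : ℂ) ≠ 0 := by
      simp [Real.pi_ne_zero, Complex.I_ne_zero]
    have : (2 * Real.pi * Complex.I : ℂ) * x = (2 * Real.pi * Complex.I) * k := by
      rw [hk]; push_cast; ring
    have := mul_left_cancel₀ h2 this
    exact_mod_cast this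
  · rintro ⟨k, hk⟩
    exact ⟨k, by rw [hk]; push_cast; ring⟩

section prim
variable {r m : ℕ} [NeZero m]

lemma fin_val_add_one (j : Fin m) : ((j + 1 : Fin m) : ℕ) = ((j : ℕ) + 1) % m := by
  rw [Fin.val_add, Fin.val_one']
  conv_lhs => rw [Nat.add_mod, Nat.mod_mod_of_dvd _ dvd_rfl]
  conv_rhs => rw [Nat.add_mod]

def cdes (y : Fin m → Fin r) : ℕ := ∑ j : Fin m, if (y (j + 1) : ℕ) < y j then 1 else 0

noncomputable def cmQ (q : ℂ) (y : Fin m → Fin r) : ℂ :=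
  ∏ j : Fin m, (if (y (j + 1) : ℕ) < y j then q ^ ((j : ℕ) + 1) else 1)

def rot (y : Fin m → Fin r) : Fin m → Fin r := fun j => y (j - 1)

lemma q_pow_gam (q : ℂ) (hq : q ^ m = 1) (y : Fin m → Fin r) :
    q ^ gam y = cmQ q y := by
  rw [gam, ← Finset.prod_pow_eq_pow_sum, cmQ]
  refine Finset.prod_congr rfl (fun j _ => ?_)
  by_cases h : (j : ℕ) + 1 < m
  · rw [dif_pos h]
    have he : (⟨(j : ℕ) + 1, h⟩ : Fin m) = j + 1 := by
      apply Fin.ext; rw [fin_val_add_one, Nat.mod_eq_of_lt h]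
    rw [he]
    split_ifs <;> simp
  · rw [dif_neg h]
    have hj1 : (j : ℕ) + 1 = m := by have := j.2; omega
    split_ifs with h2
    · rw [pow_zero, hj1, hq]
    · rw [pow_zero]

lemma rot_apply_add_one (y : Fin m → Fin r) (i : Fin m) : rot y (i + 1) = y i := by
  simp [rot]

lemma cdes_rot (y : Fin m → Fin r) : cdes (rot y) = cdes y := by
  rw [cdes, cdes]
  refine (Fintype.sum_equiv (Equiv.addRight (1 : Fin m)) _ _ (fun i => ?_)).symm
  simp only [Equiv.coe_addRight]
  have h1 : rot y (i + 1 + 1) = y (i + 1) := rot_apply_add_one y (i + 1)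
  have h2 : rot y (i + 1) = y i := rot_apply_add_one y i
  simp only [h1, h2]

lemma cmQ_rot (q : ℂ) (hq : q ^ m = 1) (y : Fin m → Fin r) :
    cmQ q (rot y) = q ^ cdes y * cmQ q y := by
  have key : ∀ i : Fin m, q ^ (((i + 1 : Fin m) : ℕ) + 1) = q * q ^ ((i : ℕ) + 1) := by
    intro i
    by_cases h : (i : ℕ) + 1 < m
    · rw [fin_val_add_one, Nat.mod_eq_of_lt h, ← pow_succ']
    · have hi : (i : ℕ) + 1 = m := by have := i.2; omega
      rw [fin_val_add_one, hi, Nat.mod_self, hq]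
      simp
  have step : cmQ q (rot y) = ∏ i : Fin m,
      (if (y (i + 1) : ℕ) < y i then q * q ^ ((i : ℕ) + 1) else 1) := by
    rw [cmQ]
    refine (Fintype.prod_equiv (Equiv.addRight (1 : Fin m)) _ _ (fun i => ?_)).symm
    simp only [Equiv.coe_addRight]
    have h1 : rot y (i + 1 + 1) = y (i + 1) := rot_apply_add_one y (i + 1)
    have h2 : rot y (i + 1) = y i := rot_apply_add_one y i
    simp only [h1, h2, key i]
  calc cmQ q (rot y)
      = ∏ i : Fin m, ((if (y (i + 1) : ℕ) < y i then q else 1) *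
          (if (y (i + 1) : ℕ) < y i then q ^ ((i : ℕ) + 1) else 1)) := by
        rw [step]; exact Finset.prod_congr rfl fun i _ => by split_ifs <;> simp
    _ = (∏ i : Fin m, if (y (i + 1) : ℕ) < y i then q else 1) * cmQ q y :=
        Finset.prod_mul_distrib
    _ = q ^ cdes y * cmQ q y := by
        congr 1
        rw [cdes, ← Finset.prod_pow_eq_pow_sum]
        exact Finset.prod_congr rfl fun i _ => by split_ifs <;> simp

end prim

section prim2
variable {r m : ℕ} [NeZero m]
open Fin.NatCast

lemma rot_bijective : Function.Bijective (rot (r := r) (m := m)) := by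
  rw [Function.bijective_iff_has_inverse]
  refine ⟨fun y j => y (j + 1), fun y => ?_, fun y => ?_⟩ <;>
    · funext j; simp [rot, sub_add_cancel]

lemma not_all_desc (y : Fin m → Fin r) : ¬ (∀ j : Fin m, (y (j + 1) : ℕ) < y j) := by
  intro h
  have key : ∀ k : ℕ, (y ((k : Fin m)) : ℕ) + k ≤ (y 0 : ℕ) := by
    intro k
    induction k with
    | zero => simp
    | succ k ih =>
      have h2 := h (k : Fin m)
      have hc : ((k : Fin m) + 1) = ((k + 1 : ℕ) : Fin m) := by push_cast; ring
      rw [hc] at h2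
      omega
  have := key ((y 0 : ℕ) + 1)
  omega

lemma cdes_lt (y : Fin m → Fin r) : cdes y < m := by
  obtain ⟨j0, hj0⟩ := not_forall.1 (not_all_desc y)
  have h1 : cdes y ≤ ∑ _j ∈ univ.erase j0, 1 := by
    rw [cdes, ← Finset.sum_erase_add _ _ (mem_univ j0), if_neg hj0, add_zero]
    exact Finset.sum_le_sum fun j _ => by split_ifs <;> simp
  have hcard : ∑ _j ∈ univ.erase j0, (1 : ℕ) = m - 1 := by
    rw [Finset.sum_const, smul_eq_mul, mul_one,
      Finset.card_erase_of_mem (mem_univ j0), Finset.card_univ, Fintype.card_fin]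
  have hm : 0 < m := Fin.pos j0
  omega

lemma no_desc_of_cdes_zero {y : Fin m → Fin r} (h : cdes y = 0) :
    ∀ j : Fin m, ¬ ((y (j + 1) : ℕ) < y j) := by
  intro j hc
  have := (Finset.sum_eq_zero_iff.1 h) j (mem_univ j)
  rw [if_pos hc] at this
  exact one_ne_zero this

lemma const_of_cdes_zero {y : Fin m → Fin r} (h : cdes y = 0) :
    ∀ j : Fin m, y j = y 0 := by
  have hnd := no_desc_of_cdes_zero h
  have mono : Monotone (fun k : ℕ => (y ((k : Fin m)) : ℕ)) := by
    apply monotone_nat_of_le_succ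
    intro k
    have h2 := hnd (k : Fin m)
    have hc : ((k : Fin m) + 1) = ((k + 1 : ℕ) : Fin m) := by push_cast; ring
    rw [hc] at h2
    omega
  intro j
  have hcast : ((j : ℕ) : Fin m) = j := Fin.cast_val_eq_self j
  have h1 : (y 0 : ℕ) ≤ (y j : ℕ) := by
    have := mono (Nat.zero_le (j : ℕ))
    simpa [hcast] using this
  have h2 : (y j : ℕ) ≤ (y 0 : ℕ) := by
    have := mono (le_of_lt j.2)
    simp only [hcast] at this
    simpa [Fin.natCast_self] using this
  exact Fin.ext (le_antisymm h2 h1)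

lemma cmQ_of_cdes_zero (q : ℂ) {y : Fin m → Fin r} (h : cdes y = 0) : cmQ q y = 1 := by
  rw [cmQ]
  exact Finset.prod_eq_one fun j _ => if_neg (no_desc_of_cdes_zero h j)

end prim2

section prim3
variable {r m : ℕ} [NeZero m]

lemma cmQ_rot_iter (q : ℂ) (hq : q ^ m = 1) (y : Fin m → Fin r) (k : ℕ) :
    cmQ q (rot^[k] y) = q ^ (k * cdes y) * cmQ q y ∧ cdes (rot^[k] y) = cdes y := by
  induction k with
  | zero => simp
  | succ k ih =>
    rw [Function.iterate_succ_apply']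
    constructor
    · rw [cmQ_rot q hq, ih.1, ih.2, ← mul_assoc, ← pow_add]
      ring_nf
    · rw [cdes_rot, ih.2]

lemma prod_rot (v : Fin r → ℂ) (y : Fin m → Fin r) :
    ∏ j : Fin m, v (rot y j) = ∏ j : Fin m, v (y j) := by
  refine (Fintype.prod_equiv (Equiv.addRight (1 : Fin m)) _ _ (fun i => ?_)).symm
  simp only [Equiv.coe_addRight, rot_apply_add_one]

lemma prod_rot_iter (v : Fin r → ℂ) (y : Fin m → Fin r) (k : ℕ) :
    ∏ j : Fin m, v ((rot^[k] y) j) = ∏ j : Fin m, v (y j) := by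
  induction k with
  | zero => simp
  | succ k ih => rw [Function.iterate_succ_apply', prod_rot, ih]

theorem prim_sum (q : ℂ) (hq : q ^ m = 1)
    (hprim : ∀ c : ℕ, 0 < c → c < m → q ^ c ≠ 1) (v : Fin r → ℂ) :
    ∑ y : Fin m → Fin r, cmQ q y * ∏ j : Fin m, v (y j)
      = ∑ i : Fin r, v i ^ m := by
  set S : ℂ := ∑ y : Fin m → Fin r, cmQ q y * ∏ j : Fin m, v (y j) with hS
  have hrot : ∀ k : ℕ, S = ∑ y : Fin m → Fin r,
      (q ^ cdes y) ^ k * (cmQ q y * ∏ j : Fin m, v (y j)) := by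
    intro k
    have hb : Function.Bijective (rot (r := r) (m := m))^[k] :=
      Function.Bijective.iterate rot_bijective k
    calc S = ∑ y : Fin m → Fin r,
        cmQ q ((rot (r := r))^[k] y) * ∏ j : Fin m, v (((rot (r := r))^[k] y) j) :=
          (Function.Bijective.sum_comp hb _).symm
      _ = _ := by
          refine Finset.sum_congr rfl fun y _ => ?_
          rw [(cmQ_rot_iter q hq y k).1, prod_rot_iter, mul_assoc, ← pow_mul, mul_comm (cdes y) k, pow_mul]
  have hmS : (m : ℂ) * S = ∑ y : Fin m → Fin r,
      (∑ k ∈ Finset.range m, (q ^ cdes y) ^ k) * (cmQ q y * ∏ j : Fin m, v (y j)) := by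
    calc (m : ℂ) * S = ∑ _k ∈ Finset.range m, S := by
          rw [Finset.sum_const, Finset.card_range, nsmul_eq_mul]
      _ = ∑ k ∈ Finset.range m, ∑ y : Fin m → Fin r,
            (q ^ cdes y) ^ k * (cmQ q y * ∏ j : Fin m, v (y j)) :=
          Finset.sum_congr rfl fun k _ => hrot k
      _ = _ := by rw [Finset.sum_comm]; simp [Finset.sum_mul]
  have geom : ∀ y : Fin m → Fin r,
      (∑ k ∈ Finset.range m, (q ^ cdes y) ^ k) = if cdes y = 0 then (m : ℂ) else 0 := by
    intro y
    by_cases h : cdes y = 0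
    · simp [h]
    · rw [if_neg h]
      have hz1 : q ^ cdes y ≠ 1 := hprim _ (Nat.pos_of_ne_zero h) (cdes_lt y)
      rw [geom_sum_eq hz1]
      have : (q ^ cdes y) ^ m = 1 := by
        rw [← pow_mul, mul_comm, pow_mul, hq, one_pow]
      rw [this, sub_self, zero_div]
  have hmS2 : (m : ℂ) * S = (m : ℂ) * ∑ i : Fin r, v i ^ m := by
    rw [hmS]
    have step : ∀ y : Fin m → Fin r,
        (∑ k ∈ Finset.range m, (q ^ cdes y) ^ k) * (cmQ q y * ∏ j : Fin m, v (y j))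
          = (m : ℂ) * (if cdes y = 0 then ∏ j : Fin m, v (y j) else 0) := by
      intro y
      rw [geom y]
      split_ifs with h
      · rw [cmQ_of_cdes_zero q h, one_mul]
      · simp
    rw [Finset.sum_congr rfl fun y _ => step y, ← Finset.mul_sum]
    congr 1
    rw [← Finset.sum_filter]
    refine Finset.sum_bij' (fun y _ => y 0) (fun i _ => fun _ => i) ?_ ?_ ?_ ?_ ?_
    · intro y hy
      exact mem_univ _
    · intro i _
      simp only [Finset.mem_filter, mem_univ, true_and, cdes]
      simp
    · intro y hy
      simp only [Finset.mem_filter, mem_univ, true_and] at hy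
      funext j
      exact (const_of_cdes_zero hy j).symm
    · intro i _
      rfl
    · intro y hy
      simp only [Finset.mem_filter, mem_univ, true_and] at hy
      calc ∏ j : Fin m, v (y j) = ∏ _j : Fin m, v (y 0) :=
            Finset.prod_congr rfl fun j _ => by rw [const_of_cdes_zero hy j]
        _ = v (y 0) ^ m := by rw [Finset.prod_const, Finset.card_univ, Fintype.card_fin]
  exact mul_left_cancel₀ (Nat.cast_ne_zero.2 (NeZero.ne m)) hmS2

end prim3

section blocks
variable {r : ℕ}

def blockEquiv (g m : ℕ) (hm : 0 < m) : Fin g × Fin m ≃ Fin (g * m) where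
  toFun p := ⟨(p.2 : ℕ) + m * (p.1 : ℕ), by
    have h1 := p.1.2
    have h2 := p.2.2
    calc (p.2 : ℕ) + m * (p.1 : ℕ) < m + m * (p.1 : ℕ) := by omega
      _ = m * ((p.1 : ℕ) + 1) := by ring
      _ ≤ m * g := Nat.mul_le_mul_left m h1
      _ = g * m := Nat.mul_comm m g⟩
  invFun j := (⟨(j : ℕ) / m, by
      have h := j.2
      exact Nat.div_lt_of_lt_mul (lt_of_lt_of_eq h (Nat.mul_comm g m))⟩,
    ⟨(j : ℕ) % m, Nat.mod_lt _ hm⟩)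
  left_inv p := by
    ext
    · simp only
      rw [Nat.add_mul_div_left _ _ hm, Nat.div_eq_of_lt p.2.2, Nat.zero_add]
    · simp only
      rw [Nat.add_mul_mod_self_left, Nat.mod_eq_of_lt p.2.2]
  right_inv j := by
    ext
    simp only
    rw [Nat.mod_add_div]


def blockFun (g m r : ℕ) (hm : 0 < m) : (Fin g → Fin m → Fin r) ≃ (Fin (g * m) → Fin r) :=
  (Equiv.curry (Fin g) (Fin m) (Fin r)).symm.trans
    (Equiv.arrowCongr (blockEquiv g m hm) (Equiv.refl (Fin r)))

lemma blockFun_apply {g m : ℕ} (hm : 0 < m) (z : Fin g → Fin m → Fin r)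
    (b : Fin g) (t : Fin m) : blockFun g m r hm z (blockEquiv g m hm (b, t)) = z b t := by
  simp [blockFun, Equiv.arrowCongr, Function.uncurry]

lemma blockEquiv_val {g m : ℕ} (hm : 0 < m) (b : Fin g) (t : Fin m) :
    ((blockEquiv g m hm (b, t) : Fin (g * m)) : ℕ) = (t : ℕ) + m * (b : ℕ) := rfl

lemma blocks_key {g m : ℕ} (hm : 0 < m) (q : ℂ) (hq : q ^ m = 1)
    (z : Fin g → Fin m → Fin r) :
    q ^ gam (blockFun g m r hm z) = ∏ b : Fin g, q ^ gam (z b) := by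
  set ι := blockEquiv g m hm
  set Φ := blockFun g m r hm
  have h1 : q ^ gam (Φ z) = ∏ p : Fin g × Fin m, q ^
      (if h : ((ι p : Fin (g * m)) : ℕ) + 1 < g * m then
        (if (Φ z ⟨((ι p : Fin (g * m)) : ℕ) + 1, h⟩ : ℕ) < (Φ z (ι p) : ℕ)
          then ((ι p : Fin (g * m)) : ℕ) + 1 else 0) else 0) := by
    rw [gam, ← Finset.prod_pow_eq_pow_sum]
    exact (Equiv.prod_comp ι _).symm
  rw [h1, Fintype.prod_prod_type]
  refine Finset.prod_congr rfl fun b _ => ?_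
  rw [gam, ← Finset.prod_pow_eq_pow_sum]
  refine Finset.prod_congr rfl fun t _ => ?_
  have hιval : ((ι (b, t) : Fin (g * m)) : ℕ) = (t : ℕ) + m * (b : ℕ) := rfl
  by_cases hA : (t : ℕ) + 1 < m
  · have hj : ((ι (b, t) : Fin (g * m)) : ℕ) + 1 < g * m := by
      rw [hιval]
      have hb := b.2
      calc (t : ℕ) + m * (b : ℕ) + 1 < m + m * (b : ℕ) := by omega
        _ = m * ((b : ℕ) + 1) := by ring
        _ ≤ m * g := Nat.mul_le_mul_left m hb
        _ = g * m := Nat.mul_comm m g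
    rw [dif_pos hj, dif_pos hA]
    have hidx : (⟨((ι (b, t) : Fin (g * m)) : ℕ) + 1, hj⟩ : Fin (g * m))
        = ι (b, ⟨(t : ℕ) + 1, hA⟩) := by
      apply Fin.ext
      rw [blockEquiv_val hm b ⟨(t : ℕ) + 1, hA⟩]
      simp only [hιval]
      omega
    rw [hidx]
    have hΦ : ∀ b' t', Φ z (ι (b', t')) = z b' t' := fun b' t' => blockFun_apply hm z b' t'
    simp only [hΦ]
    split_ifs with hc
    · rw [hιval, show (t : ℕ) + m * (b : ℕ) + 1 = ((t : ℕ) + 1) + m * (b : ℕ) from by ring,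
        pow_add, pow_mul, hq, one_pow, mul_one]
    · rfl
  · have ht : (t : ℕ) + 1 = m := by have := t.2; omega
    rw [dif_neg hA, pow_zero]
    by_cases hB : ((ι (b, t) : Fin (g * m)) : ℕ) + 1 < g * m
    · rw [dif_pos hB]
      split_ifs with hc
      · rw [hιval, show (t : ℕ) + m * (b : ℕ) + 1 = m * ((b : ℕ) + 1) from by
          rw [Nat.mul_add, Nat.mul_one]; omega, pow_mul, hq, one_pow]
      · rw [pow_zero]
    · rw [dif_neg hB, pow_zero]

lemma blocks_sum (g m : ℕ) (hm : 0 < m) (q : ℂ) (hq : q ^ m = 1) (v : Fin r → ℂ) :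
    ∑ x : Fin (g * m) → Fin r, q ^ gam x * ∏ j : Fin (g * m), v (x j)
      = (∑ y : Fin m → Fin r, q ^ gam y * ∏ j : Fin m, v (y j)) ^ g := by
  haveI : NeZero m := ⟨hm.ne'⟩
  set ι := blockEquiv g m hm
  set Φ := blockFun g m r hm
  have hprodv : ∀ z : Fin g → Fin m → Fin r,
      ∏ j : Fin (g * m), v (Φ z j) = ∏ b : Fin g, ∏ t : Fin m, v (z b t) := by
    intro z
    rw [← Equiv.prod_comp ι (fun j => v (Φ z j)), Fintype.prod_prod_type]
    exact Finset.prod_congr rfl fun b _ => Finset.prod_congr rfl fun t _ => by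
      rw [blockFun_apply hm z]
  have key : ∀ z : Fin g → Fin m → Fin r,
      q ^ gam (Φ z) * ∏ j : Fin (g * m), v (Φ z j)
        = ∏ b : Fin g, (q ^ gam (z b) * ∏ t : Fin m, v (z b t)) := by
    intro z
    rw [blocks_key hm q hq z, hprodv z, Finset.prod_mul_distrib]
  calc ∑ x : Fin (g * m) → Fin r, q ^ gam x * ∏ j : Fin (g * m), v (x j)
      = ∑ z : Fin g → Fin m → Fin r, q ^ gam (Φ z) * ∏ j : Fin (g * m), v (Φ z j) :=
        (Equiv.sum_comp Φ _).symm
    _ = ∑ z : Fin g → Fin m → Fin r, ∏ b : Fin g, (q ^ gam (z b) * ∏ t : Fin m, v (z b t)) :=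
        Finset.sum_congr rfl fun z _ => key z
    _ = ∏ _b : Fin g, ∑ y : Fin m → Fin r, q ^ gam y * ∏ t : Fin m, v (y t) := by
        rw [Finset.prod_univ_sum]
        exact Finset.sum_congr (by rw [Fintype.piFinset_univ]) fun z _ => rfl
    _ = _ := by rw [Finset.prod_const, Finset.card_univ, Fintype.card_fin]

end blocks


lemma blocks_sum' {r n g m : ℕ} (hnm : n = g * m) (hm : 0 < m) (q : ℂ) (hq : q ^ m = 1)
    (v : Fin r → ℂ) :
    ∑ x : Fin n → Fin r, q ^ gam x * ∏ j : Fin n, v (x j)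
      = (∑ y : Fin m → Fin r, q ^ gam y * ∏ j : Fin m, v (y j)) ^ g := by
  subst hnm
  exact blocks_sum g m hm q hq v

theorem prim_gam {r m : ℕ} [NeZero m] (q : ℂ) (hq : q ^ m = 1)
    (hprim : ∀ c : ℕ, 0 < c → c < m → q ^ c ≠ 1) (v : Fin r → ℂ) :
    ∑ y : Fin m → Fin r, q ^ gam y * ∏ j : Fin m, v (y j) = ∑ i : Fin r, v i ^ m := by
  rw [Finset.sum_congr rfl fun y _ => by rw [q_pow_gam q hq y]]
  exact prim_sum q hq hprim v

theorem stmt_11 (n r : ℕ) (hn : 0 < n) (hr : 0 < r)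
    (u₁ u₂ : ℕ) (hu₁ : u₁ < n) (hu₂ : u₂ < r) (w : Fin r → ℂ) :
    ∑ x : Fin n → Fin r,
        expu ((u₁ : ℝ) / (n : ℝ)) ^ gam x * expu ((u₂ : ℝ) / (r : ℝ)) ^ sig x *
          ∏ i : Fin r, w i ^ tau i x
      = (∑ i : Fin r,
          w i ^ (n / Nat.gcd n u₁) *
            expu (((i : ℕ) * n * u₂ : ℝ) / ((Nat.gcd n u₁ : ℝ) * (r : ℝ)))) ^ Nat.gcd n u₁ := by
  classical
  set g := Nat.gcd n u₁ with hgdef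
  have hg : 0 < g := Nat.gcd_pos_of_pos_left u₁ hn
  have hgn : g ∣ n := Nat.gcd_dvd_left n u₁
  have hgu : g ∣ u₁ := Nat.gcd_dvd_right n u₁
  set m := n / g with hmdef
  have hm : 0 < m := Nat.div_pos (Nat.le_of_dvd hn hgn) hg
  haveI : NeZero m := ⟨hm.ne'⟩
  have hnm : n = g * m := (Nat.mul_div_cancel' hgn).symm
  set u' := u₁ / g with hu'def
  have hu1 : u₁ = g * u' := (Nat.mul_div_cancel' hgu).symm
  have hcop : Nat.Coprime m u' := Nat.coprime_div_gcd_div_gcd hg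
  set q := expu ((u₁ : ℝ) / n) with hqdef
  set ζ := expu ((u₂ : ℝ) / r) with hzdef
  set v : Fin r → ℂ := fun i => w i * ζ ^ (i : ℕ) with hvdef
  have hn0 : (n : ℝ) ≠ 0 := Nat.cast_ne_zero.2 hn.ne'
  have hg0 : (g : ℝ) ≠ 0 := Nat.cast_ne_zero.2 hg.ne'
  have hm0 : (m : ℝ) ≠ 0 := Nat.cast_ne_zero.2 hm.ne'
  have hr0 : (r : ℝ) ≠ 0 := Nat.cast_ne_zero.2 hr.ne'
  have hq1 : q ^ m = 1 := by
    rw [hqdef, expu_pow]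
    have hcoef : (m : ℝ) * ((u₁ : ℝ) / n) = (u' : ℝ) := by
      rw [hu1, hnm]
      push_cast
      field_simp
    rw [hcoef, expu_nat]
  have hprim : ∀ c : ℕ, 0 < c → c < m → q ^ c ≠ 1 := by
    intro c hc hcm hqc
    rw [hqdef, expu_pow, expu_eq_one_iff] at hqc
    obtain ⟨k, hk⟩ := hqc
    have hk2 : (c : ℝ) * (u₁ : ℝ) = (k : ℝ) * (n : ℝ) := by
      field_simp at hk
      linarith [hk]
    have hnat : (c : ℤ) * (u₁ : ℤ) = k * n := by exact_mod_cast hk2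
    have hdvd : n ∣ c * u₁ := by
      have h3 : (n : ℤ) ∣ ((c * u₁ : ℕ) : ℤ) := ⟨k, by push_cast; rw [hnat]; ring⟩
      exact_mod_cast h3
    rw [hnm, hu1] at hdvd
    have h4 : g * m ∣ g * (c * u') := by
      have he : c * (g * u') = g * (c * u') := by ring
      rwa [he] at hdvd
    have h5 : m ∣ c * u' := (Nat.mul_dvd_mul_iff_left hg).1 h4
    have h6 : m ∣ c := hcop.dvd_of_dvd_mul_right h5
    exact absurd (Nat.le_of_dvd hc h6) (not_le.2 hcm)
  have hLHS : ∀ x : Fin n → Fin r,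
      q ^ gam x * ζ ^ sig x * ∏ i : Fin r, w i ^ tau i x
        = q ^ gam x * ∏ j : Fin n, v (x j) := by
    intro x
    have h1 : ζ ^ sig x = ∏ j : Fin n, ζ ^ (x j : ℕ) := by
      rw [sig, ← Finset.prod_pow_eq_pow_sum]
    have h2 : ∏ j : Fin n, w (x j) = ∏ i : Fin r, w i ^ tau i x := by
      rw [← Finset.prod_fiberwise_of_maps_to (fun j _ => Finset.mem_univ (x j))
        (fun j => w (x j))]
      refine Finset.prod_congr rfl fun i _ => ?_
      rw [tau, Finset.prod_congr rfl (fun j hj => by rw [(Finset.mem_filter.1 hj).2]),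
        Finset.prod_const]
    rw [mul_assoc, h1, ← h2, ← Finset.prod_mul_distrib]
    congr 1
    exact Finset.prod_congr rfl fun j _ => (mul_comm _ _)
  have hRHS : ∀ i : Fin r,
      w i ^ (n / g) * expu (((i : ℕ) * n * u₂ : ℝ) / ((g : ℝ) * (r : ℝ))) = v i ^ m := by
    intro i
    have hexp : (((i : ℕ) * n * u₂ : ℝ)) / ((g : ℝ) * r)
        = (((i : ℕ) * m : ℕ) : ℝ) * ((u₂ : ℝ) / r) := by
      rw [hnm]
      push_cast
      field_simp
    rw [hexp, ← expu_pow, ← hzdef, hvdef]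
    simp only
    rw [mul_pow, pow_mul]
  calc ∑ x : Fin n → Fin r, q ^ gam x * ζ ^ sig x * ∏ i : Fin r, w i ^ tau i x
      = ∑ x : Fin n → Fin r, q ^ gam x * ∏ j : Fin n, v (x j) :=
        Finset.sum_congr rfl fun x _ => hLHS x
    _ = (∑ y : Fin m → Fin r, q ^ gam y * ∏ j : Fin m, v (y j)) ^ g :=
        blocks_sum' hnm hm q hq1 v
    _ = (∑ i : Fin r, v i ^ m) ^ g := by
        rw [prim_gam q hq1 hprim v]
    _ = _ := by
        congr 1
        exact (Finset.sum_congr rfl fun i _ => hRHS i).symm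
end

section
/- Let n, r be positive integers, u_1 ∈ {0,…,n−1}, u_2 ∈ {0,…,r−1}, and w ∈ ℂ. Let g := gcd(n, u_1) (with gcd(n,0) = n). Then ∑_{x ∈ {0,…,r−1}^n} e(u_1/n)^{γ(x)} · e(u_2/r)^{σ(x)} · w^{wt(x)} = ( 1 − w^{n/g} + r·w^{n/g}·𝟙{ r | (n/g)·u_2 } )^{g}. -/
open scoped Classical
open Finset

/-- The Hamming weight of `x`. -/
noncomputable def hwt {n r : ℕ} (x : Fin n → Fin r) : ℕ :=
  (Finset.univ.filter (fun i => (x i : ℕ) ≠ 0)).card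

section AuxLists
open List

variable {α : Type*} [LinearOrder α]

/-- descent indicator from `a` to the head of `l`. -/
def desB (a : α) : List α → ℕ
  | [] => 0
  | b :: _ => if b < a then 1 else 0

/-- number of descents. -/
def desL : List α → ℕ
  | [] => 0
  | a :: l => desB a l + desL l

/-- major index. -/
def majL : List α → ℕ
  | [] => 0
  | a :: l => desB a l + desL l + majL l

/-- boundary descent indicator between last of `l₁` and head of `l₂`. -/
def bdry (l₁ l₂ : List α) : ℕ :=
  match l₁.getLast? with
  | none => 0
  | some a => desB a l₂

/-- cyclic descent number. -/
def desC (l : List α) : ℕ := desL l + bdry l l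

lemma desB_le (a : α) (l : List α) : desB a l ≤ 1 := by
  cases l with
  | nil => simp [desB]
  | cons b t => simp only [desB]; split <;> simp

lemma desB_append (a : α) {l₁ : List α} (h : l₁ ≠ []) (l₂ : List α) :
    desB a (l₁ ++ l₂) = desB a l₁ := by
  cases l₁ with
  | nil => exact absurd rfl h
  | cons b t => simp [desB]

lemma bdry_cons (a : α) {l₁ : List α} (h : l₁ ≠ []) (l₂ : List α) :
    bdry (a :: l₁) l₂ = bdry l₁ l₂ := by
  cases l₁ with
  | nil => exact absurd rfl h
  | cons b t => simp [bdry, List.getLast?_cons_cons]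

lemma bdry_nil (l₂ : List α) : bdry ([] : List α) l₂ = 0 := rfl

lemma bdry_single (a : α) (l₂ : List α) : bdry [a] l₂ = desB a l₂ := rfl

lemma desL_append (l₁ l₂ : List α) :
    desL (l₁ ++ l₂) = desL l₁ + desL l₂ + bdry l₁ l₂ := by
  induction l₁ with
  | nil => simp [desL, bdry_nil]
  | cons a t ih =>
      cases t with
      | nil => cases l₂ <;> simp [desL, bdry_single, desB] <;> ring
      | cons b s =>
          have h1 : desL ((a :: b :: s) ++ l₂) = desB a ((b::s) ++ l₂) + desL ((b::s) ++ l₂) := rfl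
          have h2 : desL (a :: b :: s) = desB a (b::s) + desL (b::s) := rfl
          rw [h1, h2, ih, desB_append a (by simp) l₂, bdry_cons a (by simp) l₂]
          ring

lemma majL_append (l₁ l₂ : List α) :
    majL (l₁ ++ l₂) = majL l₁ + majL l₂ + l₁.length * (desL l₂ + bdry l₁ l₂) := by
  induction l₁ with
  | nil => simp [majL, bdry_nil]
  | cons a t ih =>
      cases t with
      | nil => cases l₂ <;> simp [majL, desL, bdry_single, desB] <;> ring
      | cons b s =>
          have h1 : majL ((a :: b :: s) ++ l₂)
              = desB a ((b::s) ++ l₂) + desL ((b::s) ++ l₂) + majL ((b::s) ++ l₂) := rfl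
          have h2 : majL (a :: b :: s) = desB a (b::s) + desL (b::s) + majL (b::s) := rfl
          rw [h1, h2, ih, desL_append, desB_append a (by simp) l₂, bdry_cons a (by simp) l₂,
            List.length_cons]
          simp [List.length_cons]
          ring

lemma desL_cons (a : α) (l : List α) : desL (a :: l) = desB a l + desL l := rfl
lemma majL_cons (a : α) (l : List α) : majL (a :: l) = desB a l + desL l + majL l := rfl

lemma rotate_one_maj (l : List α) :
    majL (l.rotate 1) + desC l = majL l + l.length * bdry l l := by
  cases l with
  | nil => simp [majL, desC, desL, bdry_nil]
  | cons a s =>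
      have hrot : (a :: s).rotate 1 = s ++ [a] := by
        simpa using List.rotate_cons_succ s a 0
      rw [hrot]
      cases s with
      | nil => simp [majL, desC, desL, bdry_single, desB]
      | cons b t =>
          obtain ⟨L, hL⟩ : ∃ L, (b :: t).getLast? = some L :=
            ⟨(b :: t).getLast (by simp), List.getLast?_eq_getLast _⟩
          have e1 : bdry (b :: t) [a] = if a < L then 1 else 0 := by
            unfold bdry; rw [hL]; rfl
          have e2 : bdry (a :: b :: t) (a :: b :: t) = if a < L then 1 else 0 := by
            unfold bdry; rw [List.getLast?_cons_cons, hL]; rfl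
          rw [majL_append, desC, e2, desL_cons, majL_cons]
          rw [e1]
          simp only [desL_cons, majL_cons, List.length_cons]
          have e5 : desB a ([] : List α) = 0 := rfl
          have e6 : desL ([] : List α) = 0 := rfl
          have e7 : majL ([] : List α) = 0 := rfl
          rw [e5, e6, e7]
          ring

lemma desC_rotate_one (l : List α) : desC (l.rotate 1) = desC l := by
  cases l with
  | nil => simp
  | cons a s =>
      have hrot : (a :: s).rotate 1 = s ++ [a] := by
        simpa using List.rotate_cons_succ s a 0
      rw [hrot]
      cases s with
      | nil => simp
      | cons b t =>
          obtain ⟨L, hL⟩ : ∃ L, (b :: t).getLast? = some L :=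
            ⟨(b :: t).getLast (by simp), List.getLast?_eq_getLast _⟩
          have e1 : bdry (b :: t) [a] = if a < L then 1 else 0 := by
            unfold bdry; rw [hL]; rfl
          have e2 : bdry (a :: b :: t) (a :: b :: t) = if a < L then 1 else 0 := by
            unfold bdry; rw [List.getLast?_cons_cons, hL]; rfl
          have e3 : bdry ((b :: t) ++ [a]) ((b :: t) ++ [a]) = desB a (b :: t) := by
            unfold bdry
            rw [List.getLast?_append_of_ne_nil _ (by simp : ([a]:List α) ≠ [])]
            show desB a ((b :: t) ++ [a]) = desB a (b :: t)
            exact desB_append a (by simp) _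
          unfold desC
          rw [desL_append, e3, e1, e2]
          simp only [desL_cons]
          have e4 : desL ([] : List α) = 0 := rfl
          have e5 : desB a ([] : List α) = 0 := rfl
          rw [e4, e5]
          ring

lemma desC_rotate (l : List α) (k : ℕ) : desC (l.rotate k) = desC l := by
  induction k with
  | zero => simp
  | succ m ih =>
      have : l.rotate (m + 1) = (l.rotate m).rotate 1 := by
        rw [List.rotate_rotate]
      rw [this, desC_rotate_one, ih]

lemma desL_succ_le (a : α) (s : List α) : desL (a :: s) ≤ s.length := by
  induction s generalizing a with
  | nil => exact le_refl 0
  | cons b t ih =>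
      have h1 := desB_le a (b :: t)
      have h2 := ih b
      have e : desL (a :: b :: t) = desB a (b :: t) + desL (b :: t) := rfl
      rw [e, List.length_cons]
      omega

lemma bdry_le (l₁ l₂ : List α) : bdry l₁ l₂ ≤ 1 := by
  unfold bdry
  cases h : l₁.getLast? with
  | none => simp
  | some a => simpa using desB_le a l₂

lemma desC_le (l : List α) : desC l ≤ l.length := by
  cases l with
  | nil => simp [desC, desL, bdry_nil]
  | cons a s =>
      have h1 := desL_succ_le a s
      have h2 := bdry_le (a :: s) (a :: s)
      unfold desC
      simp only [List.length_cons]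
      omega

lemma head_le_of_desL_zero {a : α} {s : List α} (h : desL (a :: s) = 0) :
    ∀ b ∈ s, a ≤ b := by
  induction s generalizing a with
  | nil => intro b hb; simp at hb
  | cons b t ih =>
      have e : desL (a :: b :: t) = desB a (b :: t) + desL (b :: t) := rfl
      rw [e] at h
      have h1 : desB a (b :: t) = 0 := by omega
      have h2 : desL (b :: t) = 0 := by omega
      have hab : a ≤ b := by
        by_contra hc
        push_neg at hc
        simp [desB, hc] at h1
      intro c hc
      rcases List.mem_cons.mp hc with rfl | hct
      · exact hab
      · exact le_trans hab (ih h2 c hct)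

lemma le_getLast_of_desL_zero {a L : α} {s : List α} (h : desL (a :: s) = 0)
    (hL : (a :: s).getLast? = some L) : ∀ b ∈ a :: s, b ≤ L := by
  induction s generalizing a with
  | nil =>
      intro b hb
      simp at hL hb
      simp [hb, hL]
  | cons b t ih =>
      have e : desL (a :: b :: t) = desB a (b :: t) + desL (b :: t) := rfl
      rw [e] at h
      have h2 : desL (b :: t) = 0 := by omega
      have hL' : (b :: t).getLast? = some L := by
        rw [List.getLast?_cons_cons] at hL; exact hL
      have hih := ih h2 hL'
      intro c hc
      rcases List.mem_cons.mp hc with rfl | hct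
      · exact le_trans (head_le_of_desL_zero h b (by simp)) (hih b (by simp))
      · exact hih c hct

lemma getLast_le_of_desL_max {a L : α} {s : List α} (h : desL (a :: s) = s.length)
    (hL : (a :: s).getLast? = some L) : L ≤ a := by
  induction s generalizing a with
  | nil => simp at hL; simp [hL]
  | cons b t ih =>
      have e : desL (a :: b :: t) = desB a (b :: t) + desL (b :: t) := rfl
      rw [e, List.length_cons] at h
      have h1 := desB_le a (b :: t)
      have h2 := desL_succ_le b t
      have h3 : desB a (b :: t) = 1 := by omega
      have h4 : desL (b :: t) = t.length := by omega
      have hba : b < a := by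
        by_contra hc
        simp [desB, hc] at h3
      have hL' : (b :: t).getLast? = some L := by
        rw [List.getLast?_cons_cons] at hL; exact hL
      exact le_trans (ih h4 hL') (le_of_lt hba)

lemma eq_head_of_desC_zero {a : α} {s : List α} (h : desC (a :: s) = 0) :
    ∀ b ∈ a :: s, b = a := by
  obtain ⟨L, hL⟩ : ∃ L, (a :: s).getLast? = some L :=
    ⟨(a :: s).getLast (by simp), List.getLast?_eq_getLast _⟩
  have h1 : desL (a :: s) = 0 := by
    have : desC (a :: s) = desL (a :: s) + bdry (a :: s) (a :: s) := rfl
    omega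
  have h2 : bdry (a :: s) (a :: s) = 0 := by
    have : desC (a :: s) = desL (a :: s) + bdry (a :: s) (a :: s) := rfl
    omega
  have hLa : L ≤ a := by
    by_contra hc
    push_neg at hc
    have : bdry (a :: s) (a :: s) = 1 := by
      unfold bdry
      rw [hL]
      simp [desB, hc]
    omega
  intro b hb
  have hba : b ≤ L := le_getLast_of_desL_zero h1 hL b hb
  have hab : a ≤ b := by
    rcases List.mem_cons.mp hb with rfl | hbs
    · exact le_refl _
    · exact head_le_of_desL_zero h1 b hbs
  exact le_antisymm (le_trans hba hLa) hab

lemma desC_ne_length {a : α} {s : List α} : desC (a :: s) ≠ (a :: s).length := by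
  intro h
  obtain ⟨L, hL⟩ : ∃ L, (a :: s).getLast? = some L :=
    ⟨(a :: s).getLast (by simp), List.getLast?_eq_getLast _⟩
  have e : desC (a :: s) = desL (a :: s) + bdry (a :: s) (a :: s) := rfl
  have h1 := desL_succ_le a s
  have h2 := bdry_le (a :: s) (a :: s)
  rw [e, List.length_cons] at h
  have h3 : desL (a :: s) = s.length := by omega
  have h4 : bdry (a :: s) (a :: s) = 1 := by omega
  have h5 : L ≤ a := getLast_le_of_desL_max h3 hL
  have h6 : a < L := by
    by_contra hc
    unfold bdry at h4
    rw [hL] at h4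
    simp [desB, hc] at h4
  exact absurd h6 (not_lt.mpr h5)

lemma desL_replicate (n : ℕ) (b : α) : desL (List.replicate n b) = 0 := by
  induction n with
  | zero => rfl
  | succ m ih =>
      rw [List.replicate_succ]
      have e : desL (b :: List.replicate m b) = desB b (List.replicate m b) + desL (List.replicate m b) := rfl
      rw [e, ih]
      cases m with
      | zero => rfl
      | succ k => simp [List.replicate_succ, desB]

lemma majL_replicate (n : ℕ) (b : α) : majL (List.replicate n b) = 0 := by
  induction n with
  | zero => rfl
  | succ m ih =>
      rw [List.replicate_succ]
      have e : majL (b :: List.replicate m b) = desB b (List.replicate m b) + desL (List.replicate m b) + majL (List.replicate m b) := rfl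
      rw [e, ih, desL_replicate]
      cases m with
      | zero => rfl
      | succ k => simp [List.replicate_succ, desB]

lemma desC_replicate (n : ℕ) (b : α) : desC (List.replicate n b) = 0 := by
  have h1 := desL_replicate n b
  have e : desC (List.replicate n b) = desL (List.replicate n b) + bdry (List.replicate n b) (List.replicate n b) := rfl
  rw [e, h1]
  cases n with
  | zero => rfl
  | succ m =>
      unfold bdry
      rw [List.getLast?_replicate]
      simp [List.replicate_succ, desB]

lemma desL_eq_sum (l : List α) :
    desL l = ∑ i ∈ Finset.range l.length,
      (if h : i + 1 < l.length then (if l[i+1] < l[i] then 1 else 0) else 0) := by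
  induction l with
  | nil => simp [desL]
  | cons a s ih =>
      simp only [List.length_cons]
      rw [Finset.sum_range_succ']
      have h0 : (if h : 0 + 1 < s.length + 1 then
          (if (a :: s)[0+1]'(h) < (a :: s)[0]'(by simp) then 1 else 0) else 0) = desB a s := by
        cases s with
        | nil => simp [desB]
        | cons b t => simp [desB]
      have hs : ∀ i ∈ Finset.range s.length,
          (if h : i + 1 + 1 < s.length + 1 then
            (if (a :: s)[i+1+1]'(h) < (a :: s)[i+1]'(by simp; omega) then 1 else 0) else 0)
          = (if h : i + 1 < s.length then (if s[i+1]'(h) < s[i]'(by omega) then 1 else 0) else 0) := by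
        intro i hi
        by_cases h : i + 1 < s.length
        · rw [dif_pos (by omega : i + 1 + 1 < s.length + 1), dif_pos h]
          simp only [List.getElem_cons_succ]
        · rw [dif_neg (by omega), dif_neg h]
      rw [Finset.sum_congr rfl hs, h0, ← ih, desL_cons]
      ring

lemma majL_eq_sum (l : List α) :
    majL l = ∑ i ∈ Finset.range l.length,
      (if h : i + 1 < l.length then (if l[i+1] < l[i] then i + 1 else 0) else 0) := by
  induction l with
  | nil => simp [majL]
  | cons a s ih =>
      simp only [List.length_cons]
      rw [Finset.sum_range_succ']
      have h0 : (if h : 0 + 1 < s.length + 1 then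
          (if (a :: s)[0+1]'(h) < (a :: s)[0]'(by simp) then 0 + 1 else 0) else 0) = desB a s := by
        cases s with
        | nil => simp [desB]
        | cons b t => simp [desB]
      have hs : ∀ i ∈ Finset.range s.length,
          (if h : i + 1 + 1 < s.length + 1 then
            (if (a :: s)[i+1+1]'(h) < (a :: s)[i+1]'(by simp; omega) then i + 1 + 1 else 0) else 0)
          = (if h : i + 1 < s.length then (if s[i+1]'(h) < s[i]'(by omega) then i + 1 else 0) else 0)
            + (if h : i + 1 < s.length then (if s[i+1]'(h) < s[i]'(by omega) then 1 else 0) else 0) := by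
        intro i hi
        by_cases h : i + 1 < s.length
        · rw [dif_pos (by omega : i + 1 + 1 < s.length + 1), dif_pos h, dif_pos h]
          simp only [List.getElem_cons_succ]
          by_cases hc : s[i+1]'(h) < s[i]'(by omega)
          · simp [hc]
          · simp [hc]
        · rw [dif_neg (by omega), dif_neg h, dif_neg h]
      rw [Finset.sum_congr rfl hs, Finset.sum_add_distrib, h0, ← ih, ← desL_eq_sum, majL_cons]
      ring

noncomputable def Phi (ζ : ℂ) (t : α → ℂ) (l : List α) : ℂ := ζ ^ majL l * (l.map t).prod

lemma Phi_append (ζ : ℂ) (t : α → ℂ) (l₁ l₂ : List α) (hζ : ζ ^ l₁.length = 1) :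
    Phi ζ t (l₁ ++ l₂) = Phi ζ t l₁ * Phi ζ t l₂ := by
  unfold Phi
  rw [majL_append, pow_add, pow_add, pow_mul, hζ, one_pow, List.map_append, List.prod_append]
  ring

lemma geomS (β : ℂ) (m : ℕ) (hβ : β ^ m = 1) :
    ∑ k ∈ Finset.range m, β ^ k = if β = 1 then (m : ℂ) else 0 := by
  by_cases h : β = 1
  · simp [h]
  · rw [if_neg h, geom_sum_eq h, hβ]
    simp

lemma Phi_rotate (ζ : ℂ) (t : α → ℂ) (l : List α) (hζ : ζ ^ l.length = 1) (k : ℕ) :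
    Phi ζ t (l.rotate k) * (ζ ^ desC l) ^ k = Phi ζ t l := by
  induction k with
  | zero => simp
  | succ m ih =>
      have hrr : l.rotate (m + 1) = (l.rotate m).rotate 1 := by rw [List.rotate_rotate]
      have hlen : (l.rotate m).length = l.length := List.length_rotate l m
      have hdc : desC (l.rotate m) = desC l := desC_rotate l m
      have hmaj := rotate_one_maj (l.rotate m)
      -- ζ-power version
      have hz : ζ ^ majL ((l.rotate m).rotate 1) * ζ ^ desC (l.rotate m)
          = ζ ^ majL (l.rotate m) := by
        have := congrArg (fun e => ζ ^ e) hmaj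
        simp only [pow_add, pow_mul] at this
        rw [hlen, hζ, one_pow, mul_one] at this
        exact this
      have hperm1 : ((l.rotate (m+1)).map t).prod = ((l.rotate m).map t).prod := by
        rw [hrr]
        exact List.Perm.prod_eq (List.Perm.map t (List.rotate_perm (l.rotate m) 1))
      calc Phi ζ t (l.rotate (m+1)) * (ζ ^ desC l) ^ (m+1)
          = (ζ ^ majL ((l.rotate m).rotate 1) * ζ ^ desC (l.rotate m))
              * ((l.rotate m).map t).prod * (ζ ^ desC l) ^ m := by
            unfold Phi
            rw [hrr] at hperm1 ⊢
            rw [hperm1, hdc, pow_succ]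
            ring
        _ = Phi ζ t (l.rotate m) * (ζ ^ desC l) ^ m := by rw [hz]; unfold Phi; ring
        _ = Phi ζ t l := ih

open Fin.NatCast in
lemma ofFn_rotate {d r : ℕ} [NeZero d] (x : Fin d → Fin r) (k : ℕ) :
    (List.ofFn x).rotate k = List.ofFn (fun i => x (i + (k : Fin d))) := by
  apply List.ext_getElem
  · simp
  · intro i h1 h2
    rw [List.getElem_rotate]
    simp only [List.getElem_ofFn, List.length_ofFn]
    congr 1
    apply Fin.ext
    simp only [Fin.add_def, Fin.val_natCast]
    have hi : i < d := by simpa using h2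
    rw [Nat.add_mod i k d, Nat.mod_eq_of_lt hi]

open Fin.NatCast in
lemma base_case (d : ℕ) (hd : 0 < d) (ζ : ℂ) (hζ : ∀ k : ℕ, ζ ^ k = 1 ↔ d ∣ k)
    (r : ℕ) (t : Fin r → ℂ) :
    ∑ x : Fin d → Fin r, Phi ζ t (List.ofFn x) = ∑ b : Fin r, t b ^ d := by
  classical
  haveI : NeZero d := ⟨hd.ne'⟩
  have hζd : ζ ^ d = 1 := (hζ d).mpr dvd_rfl
  have hζ0 : ζ ≠ 0 := by
    intro h
    rw [h, zero_pow hd.ne'] at hζd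
    exact zero_ne_one hζd
  set S := ∑ x : Fin d → Fin r, Phi ζ t (List.ofFn x) with hS
  -- rotation invariance of the sum
  have rotS : ∀ k : ℕ, S = ∑ x : Fin d → Fin r, Phi ζ t ((List.ofFn x).rotate k) := by
    intro k
    have hcmp := Equiv.sum_comp
      (Equiv.arrowCongr (Equiv.addRight ((k : Fin d))).symm (Equiv.refl (Fin r)))
      (fun y : Fin d → Fin r => Phi ζ t (List.ofFn y))
    rw [hS, ← hcmp]
    apply Finset.sum_congr rfl
    intro x _
    congr 1
    rw [ofFn_rotate x k]
    rfl
  -- average over all rotations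
  have hdS : (d : ℂ) * S = (d : ℂ) * ∑ x : Fin d → Fin r,
      (if d ∣ desC (List.ofFn x) then Phi ζ t (List.ofFn x) else 0) := by
    have h1 : (d : ℂ) * S = ∑ k ∈ Finset.range d, ∑ x : Fin d → Fin r,
        Phi ζ t ((List.ofFn x).rotate k) := by
      rw [Finset.sum_congr rfl (fun k _ => (rotS k).symm), Finset.sum_const,
        Finset.card_range, nsmul_eq_mul]
    rw [h1, Finset.sum_comm, Finset.mul_sum]
    apply Finset.sum_congr rfl
    intro x _
    set l := List.ofFn x with hl
    have hlen : l.length = d := by simp [hl]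
    have hζl : ζ ^ l.length = 1 := by rw [hlen]; exact hζd
    set β := ζ ^ desC l with hβ
    have hβ0 : β ≠ 0 := pow_ne_zero _ hζ0
    have hβd : β ^ d = 1 := by
      rw [hβ, ← pow_mul, mul_comm, pow_mul, hζd, one_pow]
    have hrot : ∀ k : ℕ, Phi ζ t (l.rotate k) = Phi ζ t l * (β⁻¹) ^ k := by
      intro k
      have h2 := Phi_rotate ζ t l hζl k
      rw [← hβ] at h2
      rw [← h2, mul_assoc, ← mul_pow, mul_inv_cancel₀ hβ0, one_pow, mul_one]
    have hβinv : (β⁻¹) ^ d = 1 := by rw [inv_pow, hβd, inv_one]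
    rw [Finset.sum_congr rfl (fun k _ => hrot k), ← Finset.mul_sum, geomS β⁻¹ d hβinv]
    have hone : β⁻¹ = 1 ↔ d ∣ desC l := by
      rw [inv_eq_one, hβ]
      exact hζ (desC l)
    by_cases hdvd : d ∣ desC l
    · rw [if_pos (hone.mpr hdvd), if_pos hdvd]
      ring
    · rw [if_neg (fun h => hdvd (hone.mp h)), if_neg hdvd]
      ring
  have hSdvd : S = ∑ x : Fin d → Fin r,
      (if d ∣ desC (List.ofFn x) then Phi ζ t (List.ofFn x) else 0) := by
    have hd0 : (d : ℂ) ≠ 0 := Nat.cast_ne_zero.mpr hd.ne'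
    exact mul_left_cancel₀ hd0 hdS
  -- only constant words survive
  rw [hSdvd]
  have hconst : ∀ x : Fin d → Fin r, d ∣ desC (List.ofFn x) → ∀ i, x i = x ⟨0, hd⟩ := by
    intro x hx i
    set l := List.ofFn x with hl
    have hlen : l.length = d := by simp [hl]
    have hdle : desC l ≤ d := hlen ▸ desC_le l
    have hne : desC l ≠ d := by
      intro h
      obtain ⟨a, s, hcons⟩ : ∃ a s, l = a :: s := by
        cases hl2 : l with
        | nil => rw [hl2] at hlen; simp at hlen; omega
        | cons a s => exact ⟨a, s, rfl⟩
      rw [hcons] at h hlen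
      exact desC_ne_length (h.trans hlen.symm)
    have hzero : desC l = 0 := by
      rcases Nat.eq_zero_or_pos (desC l) with h | h
      · exact h
      · exact absurd (Nat.le_antisymm hdle (Nat.le_of_dvd h hx)) hne
    obtain ⟨a, s, hcons⟩ : ∃ a s, l = a :: s := by
      cases hl2 : l with
      | nil => rw [hl2] at hlen; simp at hlen; omega
      | cons a s => exact ⟨a, s, rfl⟩
    have hall := eq_head_of_desC_zero (hcons ▸ hzero)
    have hmem : ∀ j : Fin d, x j ∈ l := by
      intro j
      rw [hl]
      exact List.mem_ofFn.mpr ⟨j, rfl⟩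
    have h1 : x i = a := hall _ (hcons ▸ hmem i)
    have h2 : x ⟨0, hd⟩ = a := hall _ (hcons ▸ hmem ⟨0, hd⟩)
    rw [h1, h2]
  -- restrict the sum to constant words
  have himg : ∀ x : Fin d → Fin r, x ∈ Finset.univ →
      x ∉ Finset.image (fun (b : Fin r) (_ : Fin d) => b) Finset.univ →
      (if d ∣ desC (List.ofFn x) then Phi ζ t (List.ofFn x) else 0) = 0 := by
    intro x _ hx
    rw [if_neg]
    intro hdvd
    apply hx
    apply Finset.mem_image.mpr
    refine ⟨x ⟨0, hd⟩, Finset.mem_univ _, ?_⟩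
    funext i
    exact (hconst x hdvd i).symm
  rw [← Finset.sum_subset (Finset.subset_univ _) himg]
  rw [Finset.sum_image (by
    intro b _ b' _ hbb
    exact congrFun hbb ⟨0, hd⟩)]
  apply Finset.sum_congr rfl
  intro b _
  have hofn : List.ofFn (fun (_ : Fin d) => b) = List.replicate d b := List.ofFn_const d b
  rw [hofn, if_pos (by rw [desC_replicate]; exact Dvd.intro 0 rfl)]
  unfold Phi
  rw [majL_replicate, pow_zero, one_mul, List.map_replicate, List.prod_replicate]

lemma sum_split (m k r : ℕ) (F : List (Fin r) → ℂ) :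
    ∑ x : Fin (m + k) → Fin r, F (List.ofFn x)
      = ∑ p : (Fin m → Fin r) × (Fin k → Fin r), F (List.ofFn p.1 ++ List.ofFn p.2) := by
  have hcmp := Equiv.sum_comp
    ((Equiv.sumArrowEquivProdArrow (Fin m) (Fin k) (Fin r)).symm.trans
      (Equiv.arrowCongr finSumFinEquiv (Equiv.refl (Fin r))))
    (fun y : Fin (m + k) → Fin r => F (List.ofFn y))
  rw [← hcmp]
  apply Finset.sum_congr rfl
  intro p _
  congr 1
  rw [List.ofFn_add]
  have h1 : ∀ i : Fin m,
      ((Equiv.sumArrowEquivProdArrow (Fin m) (Fin k) (Fin r)).symm.trans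
        (Equiv.arrowCongr finSumFinEquiv (Equiv.refl (Fin r)))) p (Fin.castAdd k i) = p.1 i := by
    intro i
    show Sum.elim p.1 p.2 (finSumFinEquiv.symm (Fin.castAdd k i)) = p.1 i
    rw [finSumFinEquiv_symm_apply_castAdd]
    rfl
  have h2 : ∀ j : Fin k,
      ((Equiv.sumArrowEquivProdArrow (Fin m) (Fin k) (Fin r)).symm.trans
        (Equiv.arrowCongr finSumFinEquiv (Equiv.refl (Fin r)))) p (Fin.natAdd m j) = p.2 j := by
    intro j
    show Sum.elim p.1 p.2 (finSumFinEquiv.symm (Fin.natAdd m j)) = p.2 j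
    rw [finSumFinEquiv_symm_apply_natAdd]
    rfl
  exact congrArg₂ (· ++ ·) (congrArg List.ofFn (funext h1)) (congrArg List.ofFn (funext h2))

lemma core_lemma (d : ℕ) (hd : 0 < d) (ζ : ℂ) (hζ : ∀ k : ℕ, ζ ^ k = 1 ↔ d ∣ k)
    (r : ℕ) (t : Fin r → ℂ) (g : ℕ) :
    ∑ x : Fin (d * g) → Fin r, Phi ζ t (List.ofFn x) = (∑ b : Fin r, t b ^ d) ^ g := by
  induction g with
  | zero =>
      rw [pow_zero]
      haveI : IsEmpty (Fin (d * 0)) := by rw [Nat.mul_zero]; infer_instance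
      rw [Fintype.sum_unique]
      have h0 : List.ofFn (default : Fin (d * 0) → Fin r) = [] := by
        apply List.eq_nil_of_length_eq_zero
        simp
      rw [h0]
      have h1 : majL ([] : List (Fin r)) = 0 := rfl
      unfold Phi
      rw [h1]
      simp
  | succ g ih =>
      calc ∑ x : Fin (d * (g + 1)) → Fin r, Phi ζ t (List.ofFn x)
          = ∑ p : (Fin (d * g) → Fin r) × (Fin d → Fin r),
              Phi ζ t (List.ofFn p.1 ++ List.ofFn p.2) := sum_split (d * g) d r (Phi ζ t)
        _ = ∑ p : (Fin (d * g) → Fin r) × (Fin d → Fin r),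
              Phi ζ t (List.ofFn p.1) * Phi ζ t (List.ofFn p.2) := by
            apply Finset.sum_congr rfl
            intro p _
            apply Phi_append
            rw [List.length_ofFn]
            exact (hζ _).mpr ⟨g, rfl⟩
        _ = (∑ x₁ : Fin (d * g) → Fin r, Phi ζ t (List.ofFn x₁))
              * (∑ x₂ : Fin d → Fin r, Phi ζ t (List.ofFn x₂)) := by
            rw [Fintype.sum_prod_type, Finset.sum_mul_sum]
        _ = (∑ b : Fin r, t b ^ d) ^ (g + 1) := by
            rw [ih, base_case d hd ζ hζ r t, pow_succ]


lemma expu_pow_eq_one_iff (a m : ℕ) (hm : 0 < m) (k : ℕ) :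
    expu ((a : ℝ) / (m : ℝ)) ^ k = 1 ↔ m ∣ k * a := by
  have hm' : (m : ℂ) ≠ 0 := Nat.cast_ne_zero.mpr hm.ne'
  have hc : (2 * (Real.pi : ℂ) * Complex.I) ≠ 0 := Complex.two_pi_I_ne_zero
  unfold expu
  rw [← Complex.exp_nat_mul, Complex.exp_eq_one_iff]
  constructor
  · rintro ⟨z, hz⟩
    have h1 : (k : ℂ) * ((a : ℂ) / (m : ℂ)) = (z : ℂ) := by
      apply mul_left_cancel₀ hc
      push_cast at hz ⊢
      linear_combination hz
    have h2 : ((k * a : ℕ) : ℂ) = (z : ℂ) * (m : ℂ) := by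
      field_simp at h1
      push_cast
      linear_combination h1
    have h3 : ((k * a : ℕ) : ℤ) = z * (m : ℤ) := by exact_mod_cast h2
    have : (m : ℤ) ∣ ((k * a : ℕ) : ℤ) := ⟨z, by linarith⟩
    exact_mod_cast this
  · rintro ⟨c', hc'⟩
    refine ⟨(c' : ℤ), ?_⟩
    have h1 : ((k * a : ℕ) : ℂ) = (c' : ℂ) * (m : ℂ) := by
      rw [hc']
      push_cast
      ring
    push_cast at h1 ⊢
    field_simp
    linear_combination h1

lemma gcd_div_dvd_iff (n u₁ : ℕ) (hn : 0 < n) (k : ℕ) :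
    n ∣ k * u₁ ↔ (n / Nat.gcd n u₁) ∣ k := by
  set g := Nat.gcd n u₁ with hg
  have hgpos : 0 < g := Nat.gcd_pos_of_pos_left u₁ hn
  have h1 : g ∣ n := Nat.gcd_dvd_left n u₁
  have h2 : g ∣ u₁ := Nat.gcd_dvd_right n u₁
  have hco : Nat.Coprime (n / g) (u₁ / g) := Nat.coprime_div_gcd_div_gcd hgpos
  have hn' : n = g * (n / g) := (Nat.mul_div_cancel' h1).symm
  have hu' : u₁ = g * (u₁ / g) := (Nat.mul_div_cancel' h2).symm
  constructor
  · intro h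
    have key : k * u₁ = g * (k * (u₁ / g)) := by
      conv_lhs => rw [hu']
      ring
    have h3 : g * (n / g) ∣ g * (k * (u₁ / g)) := by rw [← hn', ← key]; exact h
    exact hco.dvd_of_dvd_mul_right ((mul_dvd_mul_iff_left hgpos.ne').mp h3)
  · rintro ⟨c, hc⟩
    have key : k * u₁ = n * (c * (u₁ / g)) := by
      conv_lhs => rw [hu', hc]
      conv_rhs => rw [hn']
      ring
    exact ⟨c * (u₁ / g), key⟩

end AuxLists

theorem stmt_12 (n r : ℕ) (hn : 0 < n) (hr : 0 < r)
    (u₁ u₂ : ℕ) (hu₁ : u₁ < n) (hu₂ : u₂ < r) (w : ℂ) :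
    ∑ x : Fin n → Fin r,
        expu ((u₁ : ℝ) / (n : ℝ)) ^ gam x * expu ((u₂ : ℝ) / (r : ℝ)) ^ sig x * w ^ hwt x
      = (1 - w ^ (n / Nat.gcd n u₁) +
          (r : ℂ) * w ^ (n / Nat.gcd n u₁) *
            (if r ∣ (n / Nat.gcd n u₁) * u₂ then 1 else 0)) ^ Nat.gcd n u₁ := by
  classical
  set g := Nat.gcd n u₁ with hgdef
  set d := n / g with hddef
  have hgpos : 0 < g := Nat.gcd_pos_of_pos_left u₁ hn
  have hdpos : 0 < d := Nat.div_pos (Nat.le_of_dvd hn (Nat.gcd_dvd_left n u₁)) hgpos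
  have hnd : n = d * g := by
    rw [hddef, hgdef, Nat.div_mul_cancel (Nat.gcd_dvd_left n u₁)]
  set ζ := expu ((u₁ : ℝ) / (n : ℝ)) with hζdef
  set η := expu ((u₂ : ℝ) / (r : ℝ)) with hηdef
  have hζ : ∀ k : ℕ, ζ ^ k = 1 ↔ d ∣ k := fun k =>
    (expu_pow_eq_one_iff u₁ n hn k).trans (gcd_div_dvd_iff n u₁ hn k)
  have hη : ∀ k : ℕ, η ^ k = 1 ↔ r ∣ k * u₂ := expu_pow_eq_one_iff u₂ r hr
  set t : Fin r → ℂ := fun b => η ^ (b : ℕ) * w ^ (if (b : ℕ) ≠ 0 then 1 else 0) with htdef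
  -- summand conversion
  have hsummand : ∀ x : Fin n → Fin r,
      ζ ^ gam x * η ^ sig x * w ^ hwt x = Phi ζ t (List.ofFn x) := by
    intro x
    have hgam : gam x = majL (List.ofFn x) := by
      have h0 : gam x = ∑ i : Fin n,
          (fun j : ℕ => if h : j + 1 < n then
            (if (x ⟨j + 1, h⟩ : ℕ) < (x ⟨j, by omega⟩ : ℕ) then j + 1 else 0) else 0) ↑i := by
        unfold gam
        apply Finset.sum_congr rfl
        intro i _
        cases i
        rfl
      have h1 := Fin.sum_univ_eq_sum_range
          (fun j : ℕ => if h : j + 1 < n then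
            (if (x ⟨j + 1, h⟩ : ℕ) < (x ⟨j, by omega⟩ : ℕ) then j + 1 else 0) else 0) n
      rw [h0, h1, majL_eq_sum]
      simp only [List.length_ofFn]
      apply Finset.sum_congr rfl
      intro i hi
      by_cases h : i + 1 < n
      · rw [dif_pos h, dif_pos h]
        congr 1
        simp only [List.getElem_ofFn]
        rw [Fin.lt_def]
      · rw [dif_neg h, dif_neg h]
    have hprod : η ^ sig x * w ^ hwt x = ((List.ofFn x).map t).prod := by
      rw [List.map_ofFn, List.prod_ofFn]
      have : ∀ i : Fin n, (t ∘ x) i = η ^ ((x i : ℕ)) * w ^ (if (x i : ℕ) ≠ 0 then 1 else 0) :=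
        fun i => rfl
      rw [Finset.prod_congr rfl (fun i _ => this i), Finset.prod_mul_distrib,
        Finset.prod_pow_eq_pow_sum, Finset.prod_pow_eq_pow_sum]
      have hc : (Finset.univ.filter (fun i => (x i : ℕ) ≠ 0)).card
          = ∑ i : Fin n, (if (x i : ℕ) ≠ 0 then 1 else 0) := Finset.card_filter _ _
      rw [sig, hwt, hc]
    rw [Phi, ← hgam, ← hprod]
    ring
  -- RHS conversion
  have hRHS : (∑ b : Fin r, t b ^ d)
      = 1 - w ^ d + (r : ℂ) * w ^ d * (if r ∣ d * u₂ then 1 else 0) := by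
    have hstep : ∀ b : Fin r,
        t b ^ d = (η ^ d) ^ (b : ℕ) * w ^ d + (if (b : ℕ) = 0 then 1 - w ^ d else 0) := by
      intro b
      by_cases hb : (b : ℕ) = 0
      · have ht : t b = 1 := by rw [htdef]; simp [hb]
        rw [ht, one_pow, hb, if_pos rfl, pow_zero, one_mul]
        ring
      · have ht : t b = η ^ (b : ℕ) * w := by rw [htdef]; simp [hb]
        rw [ht, mul_pow, ← pow_mul, mul_comm (b : ℕ) d, pow_mul, if_neg hb, add_zero]
    rw [Finset.sum_congr rfl (fun b _ => hstep b), Finset.sum_add_distrib]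
    have h0 : ∑ b : Fin r, (if (b : ℕ) = 0 then 1 - w ^ d else 0) = 1 - w ^ d := by
      rw [Finset.sum_eq_single (⟨0, hr⟩ : Fin r)]
      · simp
      · intro b _ hb
        rw [if_neg]
        intro hb0
        exact hb (Fin.ext hb0)
      · intro h
        exact absurd (Finset.mem_univ _) h
    have h1 : ∑ b : Fin r, (η ^ d) ^ (b : ℕ) * w ^ d
        = (if r ∣ d * u₂ then (r : ℂ) else 0) * w ^ d := by
      rw [← Finset.sum_mul]
      congr 1
      rw [Fin.sum_univ_eq_sum_range (fun k => (η ^ d) ^ k) r,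
        geomS (η ^ d) r (by rw [← pow_mul]; exact (hη (d * r)).mpr ⟨d * u₂, by ring⟩)]
      by_cases hcond : r ∣ d * u₂
      · rw [if_pos ((hη d).mpr hcond), if_pos hcond]
      · rw [if_neg (fun h => hcond ((hη d).mp h)), if_neg hcond]
    rw [h0, h1]
    by_cases hcond : r ∣ d * u₂ <;> simp [hcond] <;> ring
  calc ∑ x : Fin n → Fin r, ζ ^ gam x * η ^ sig x * w ^ hwt x
      = ∑ x : Fin n → Fin r, Phi ζ t (List.ofFn x) :=
        Finset.sum_congr rfl (fun x _ => hsummand x)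
    _ = (∑ b : Fin r, t b ^ d) ^ g := by
        rw [hnd]
        exact core_lemma d hdpos ζ hζ r t g
    _ = (1 - w ^ d + (r : ℂ) * w ^ d * (if r ∣ d * u₂ then 1 else 0)) ^ g := by rw [hRHS]
end
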